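/- Let a : (0,∞) → ℝ satisfy a(x+y) = a(x) + a(y) for all x, y > 0. If the restriction of a to some set A ⊆ (0,∞) of positive Lebesgue measure is Lebesgue measurable, then there exists λ ∈ ℝ such that a(x) = λ·x for all x > 0. -/

import Mathlib

open MeasureTheory Pointwise

lemma cauchy_nat_mul (a : ℝ → ℝ)
    (hadd : ∀ x > (0:ℝ), ∀ y > (0:ℝ), a (x + y) = a x + a y) :
    ∀ k : ℕ, ∀ x > (0:ℝ), a (((k:ℝ) + 1) * x) = ((k:ℝ) + 1) * a x := by
  intro k
  induction k with
  | zero => intro x hx; simp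
  | succ k ih =>
    intro x hx
    have h1 : ((k:ℝ) + 1) * x > 0 := by positivity
    have h2 : ((k + 1 : ℕ):ℝ) + 1 = ((k:ℝ) + 1) + 1 := by push_cast; ring
    have h3 : (((k:ℝ) + 1) + 1) * x = ((k:ℝ) + 1) * x + x := by ring
    rw [h2, h3, hadd _ h1 x hx, ih x hx]
    ring

lemma cauchy_nat_mul' (a : ℝ → ℝ)
    (hadd : ∀ x > (0:ℝ), ∀ y > (0:ℝ), a (x + y) = a x + a y) :
    ∀ k : ℕ, 0 < k → ∀ x > (0:ℝ), a ((k:ℝ) * x) = (k:ℝ) * a x := by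
  intro k hk x hx
  obtain ⟨j, rfl⟩ := Nat.exists_eq_succ_of_ne_zero hk.ne'
  have h2 : ((j + 1 : ℕ):ℝ) = (j:ℝ) + 1 := by push_cast; ring
  rw [h2]
  exact cauchy_nat_mul a hadd j x hx

lemma cauchy_rat (a : ℝ → ℝ)
    (hadd : ∀ x > (0:ℝ), ∀ y > (0:ℝ), a (x + y) = a x + a y)
    (q : ℚ) (hq : 0 < q) : a (q:ℝ) = (q:ℝ) * a 1 := by
  have hmZ : 0 < q.num := Rat.num_pos.2 hq
  set m : ℕ := q.num.toNat with hm'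
  have hm : 0 < m := by omega
  set d : ℕ := q.den with hd'
  have hd : 0 < d := q.pos
  have hd0 : (d:ℝ) ≠ 0 := Nat.cast_ne_zero.2 hd.ne'
  have hqeq : (q:ℝ) = (m:ℝ) / (d:ℝ) := by
    rw [Rat.cast_def]
    congr 1
    exact_mod_cast (Int.toNat_of_nonneg hmZ.le).symm
  have h1d : (0:ℝ) < 1 / (d:ℝ) := by positivity
  have hA1 : a (1 / (d:ℝ)) = a 1 / (d:ℝ) := by
    have h := cauchy_nat_mul' a hadd d hd (1 / (d:ℝ)) h1d
    rw [mul_one_div, div_self hd0] at h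
    field_simp [h]
    exact h.symm
  have hAm : a ((m:ℝ) * (1 / (d:ℝ))) = (m:ℝ) * a (1 / (d:ℝ)) :=
    cauchy_nat_mul' a hadd m hm (1 / (d:ℝ)) h1d
  have heq : (m:ℝ) * (1 / (d:ℝ)) = (q:ℝ) := by rw [hqeq]; ring
  rw [← heq, hAm, hA1]
  ring

/-- An additive function on (0,∞) measurable on a set of positive Lebesgue measure
is linear. -/
theorem additive_measurableOn_linear (a : ℝ → ℝ)
    (hadd : ∀ x > (0:ℝ), ∀ y > (0:ℝ), a (x + y) = a x + a y)
    (A : Set ℝ) (hA : A ⊆ Set.Ioi (0:ℝ)) (hmeasA : MeasurableSet A)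
    (hpos : 0 < volume A) (hmeas : Measurable fun x : A => a (x : ℝ)) :
    ∃ l : ℝ, ∀ x > (0:ℝ), a x = l * x := by
  -- Step 1: find a subset B of positive measure on which `a` is bounded.
  have key : ∃ n : ℕ, 0 < volume (Subtype.val '' {x : A | |a x.1| ≤ (n:ℝ)}) := by
    by_contra h
    push_neg at h
    have hz : volume A = 0 := by
      have hsub : A ⊆ ⋃ n : ℕ, Subtype.val '' {x : A | |a x.1| ≤ (n:ℝ)} := by
        intro x hx
        obtain ⟨n, hn⟩ := exists_nat_ge |a x|
        exact Set.mem_iUnion.2 ⟨n, ⟨⟨x, hx⟩, hn, rfl⟩⟩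
      exact measure_mono_null hsub
        (measure_iUnion_null fun n => le_antisymm (h n) zero_le)
    exact absurd hz hpos.ne'
  obtain ⟨n, hn⟩ := key
  set B : Set ℝ := Subtype.val '' {x : A | |a x.1| ≤ (n:ℝ)} with hB
  have hBA : B ⊆ A := by rintro x ⟨⟨y, hy⟩, _, rfl⟩; exact hy
  have hBmeas : MeasurableSet B :=
    MeasurableSet.subtype_image hmeasA (measurableSet_le hmeas.abs measurable_const)
  have hBbd : ∀ x ∈ B, |a x| ≤ (n:ℝ) := by
    rintro x ⟨⟨y, hy⟩, hle, rfl⟩; exact hle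
  -- Step 2: Steinhaus theorem, `a` is bounded on an interval (0, δ).
  have hst : B - B ∈ nhds (0:ℝ) :=
    Measure.sub_mem_nhds_zero_of_addHaar_pos volume B hBmeas hn
  obtain ⟨δ, hδpos, hδ⟩ := Metric.mem_nhds_iff.1 hst
  have hbd : ∀ t : ℝ, 0 < t → t < δ → |a t| ≤ 2 * n := by
    intro t ht htδ
    have htB : t ∈ B - B := by
      apply hδ
      rw [Metric.mem_ball, Real.dist_eq, sub_zero, abs_of_pos ht]
      exact htδ
    obtain ⟨b₁, hb₁, b₂, hb₂, hEq⟩ := Set.mem_sub.1 htB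
    have hb₂pos : (0:ℝ) < b₂ := hA (hBA hb₂)
    have hsum : a b₁ = a b₂ + a t := by
      rw [← hadd b₂ hb₂pos t ht]
      congr 1
      linarith
    have h1 := hBbd b₁ hb₁
    have h2 := hBbd b₂ hb₂
    have : |a t| = |a b₁ - a b₂| := by rw [hsum]; congr 1; ring
    rw [this]
    calc |a b₁ - a b₂| ≤ |a b₁| + |a b₂| := abs_sub _ _
      _ ≤ n + n := add_le_add h1 h2
      _ = 2 * n := by ring
  -- Step 3: conclude `a x = a 1 * x` for all `x > 0`.
  refine ⟨a 1, fun x hx => ?_⟩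
  set M : ℝ := 2 * n + |a 1| * δ with hM
  have key2 : ∀ k : ℕ, |a x - a 1 * x| ≤ M * (1 / ((k:ℝ) + 1)) := by
    intro k
    have hk1 : (0:ℝ) < (k:ℝ) + 1 := by positivity
    have hδk : 0 < δ / ((k:ℝ) + 1) := by positivity
    have hlt : max 0 (x - δ / ((k:ℝ) + 1)) < x := by
      apply max_lt hx
      linarith
    obtain ⟨q, hq1, hq2⟩ := exists_rat_btwn hlt
    have hq0 : (0:ℝ) < (q:ℝ) := lt_of_le_of_lt (le_max_left _ _) hq1
    have hq0' : (0:ℚ) < q := by exact_mod_cast hq0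
    set t : ℝ := x - (q:ℝ) with ht'
    have ht0 : 0 < t := sub_pos.2 hq2
    have htδ : t < δ / ((k:ℝ) + 1) := by
      have := lt_of_le_of_lt (le_max_right 0 (x - δ / ((k:ℝ) + 1))) hq1
      simp only [ht']
      linarith
    have hax : a x = a (q:ℝ) + a t := by
      have hqt : (q:ℝ) + t = x := by rw [ht']; ring
      rw [← hqt, hadd _ hq0 t ht0]
    have haq : a (q:ℝ) = (q:ℝ) * a 1 := cauchy_rat a hadd q hq0'
    -- bound |a t|
    have hkt : ((k:ℝ) + 1) * t < δ := by
      rw [lt_div_iff₀ hk1] at htδ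
      linarith [htδ]
    have hktpos : 0 < ((k:ℝ) + 1) * t := by positivity
    have h2 : |a t| ≤ 2 * n / ((k:ℝ) + 1) := by
      have hb := hbd (((k:ℝ) + 1) * t) hktpos hkt
      rw [cauchy_nat_mul a hadd k t ht0, abs_mul, abs_of_pos hk1] at hb
      rw [le_div_iff₀ hk1]
      linarith [hb]
    have htle : |t| ≤ δ / ((k:ℝ) + 1) := by
      rw [abs_of_pos ht0]; exact htδ.le
    have hdiff : a x - a 1 * x = a t - a 1 * t := by
      rw [hax, haq, ht']; ring
    calc |a x - a 1 * x| = |a t - a 1 * t| := by rw [hdiff]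
      _ ≤ |a t| + |a 1 * t| := abs_sub _ _
      _ = |a t| + |a 1| * |t| := by rw [abs_mul]
      _ ≤ 2 * n / ((k:ℝ) + 1) + |a 1| * (δ / ((k:ℝ) + 1)) := by
          apply add_le_add h2
          exact mul_le_mul_of_nonneg_left htle (abs_nonneg _)
      _ = M * (1 / ((k:ℝ) + 1)) := by rw [hM]; field_simp
  have h0 : Filter.Tendsto (fun k : ℕ => M * (1 / ((k:ℝ) + 1)))
      Filter.atTop (nhds 0) := by
    have := tendsto_one_div_add_atTop_nhds_zero_nat.const_mul M
    simpa using this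
  have hle : |a x - a 1 * x| ≤ 0 := ge_of_tendsto' h0 key2
  have : a x - a 1 * x = 0 := abs_eq_zero.1 (le_antisymm hle (abs_nonneg _))
  linarith
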